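/- Assume (H1), (H2), (H5), let μ > 0 with εγ₂ < μ < γ₁, let a, b be Borel measurable, and let (ū, v̄) : [0,∞) → ℝⁿ×ℝᵐ be any continuous function with (ū₀, v̄₀) its value at 0 and sup_{t≥0}(|ū_t| + |v̄_t|) arbitrary. Define the extension z̄_t := ((I − |t|A)^{−1}ū₀, v̄₀) for t ≤ 0 and z̄_t := (ū_t, v̄_t) for t > 0, and define Z̄₀(t) := −z̄_t + I(z̄)(t) for t ≤ 0 and Z̄₀(t) := (e^{(A/ε)t}(I₁(z̄)(0) − ū₀), 0) for t > 0, where I = (I₁, I₂) with anchor v̄₀ is I₁(z̄)(t) = ∫_{−∞}^t e^{(A/ε)(t−r)} ε^{−1} U(z̄¹_r + a(r), z̄²_r + b(r)) dr, I₂(z̄)(t) = e^{Bt}v̄₀ − ∫_t^0 e^{B(t−r)} V(z̄¹_r + a(r), z̄²_r + b(r)) dr. Then sup_{t∈ℝ} e^{(μ/ε)t}|Z̄₀(t)| ≤ 2(|ū₀| + |v̄₀|) + 2M_U/γ₁ + M_V/γ₂. -/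

import Mathlib

open scoped RealInnerProductSpace
open MeasureTheory Set

section Aux

lemma hasDerivAt_exp_mul_real (c r : ℝ) :
    HasDerivAt (fun x : ℝ => Real.exp (c * x)) (c * Real.exp (c * r)) r := by
  simpa [mul_comm, Function.comp_def] using (Real.hasDerivAt_exp (c * r)).comp r ((hasDerivAt_id r).const_mul c)

lemma intervalIntegral_exp_mul (c y t : ℝ) (hc : c ≠ 0) :
    ∫ r in y..t, Real.exp (c * r) = Real.exp (c * t) / c - Real.exp (c * y) / c := by
  apply intervalIntegral.integral_eq_sub_of_hasDerivAt (f := fun x => Real.exp (c * x) / c)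
  · intro x _
    have h := (hasDerivAt_exp_mul_real c x).div_const c
    rwa [mul_div_cancel_left₀ _ hc] at h
  · exact (Real.continuous_exp.comp (continuous_const.mul continuous_id)).intervalIntegrable _ _

lemma integrableOn_exp_mul_Iic' (c t : ℝ) (hc : 0 < c) :
    IntegrableOn (fun r => Real.exp (c * r)) (Iic t) := by
  refine integrableOn_Iic_of_intervalIntegral_norm_bounded (Real.exp (c * t) / c) t
    (fun y => ((Real.continuous_exp.comp (continuous_const.mul continuous_id)).integrableOn_Ioc))
    Filter.tendsto_id ?_
  filter_upwards with y
  simp only [id_eq, Real.norm_eq_abs, Real.abs_exp]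
  rw [intervalIntegral_exp_mul c y t hc.ne', sub_le_self_iff]
  positivity

lemma integral_exp_mul_Iic' (c t : ℝ) (hc : 0 < c) :
    ∫ r in Iic t, Real.exp (c * r) = Real.exp (c * t) / c := by
  have h := integral_Iic_of_hasDerivAt_of_tendsto
    (f := fun x : ℝ => Real.exp (c * x) / c) (f' := fun x : ℝ => Real.exp (c * x)) (a := t)
    (m := 0) ?_ ?_ (integrableOn_exp_mul_Iic' c t hc) ?_
  · rw [h, sub_zero]
  · exact ((Real.continuous_exp.comp (continuous_const.mul continuous_id)).div_const
      c).continuousWithinAt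
  · intro x _
    have h := (hasDerivAt_exp_mul_real c x).div_const c
    rwa [mul_div_cancel_left₀ _ hc.ne'] at h
  · have h1 : Filter.Tendsto (fun x : ℝ => c * x) Filter.atBot Filter.atBot :=
      Filter.Tendsto.const_mul_atBot hc Filter.tendsto_id
    have h2 := Real.tendsto_exp_atBot.comp h1
    simpa using h2.div_const c

variable {E : Type*} [NormedAddCommGroup E] [InnerProductSpace ℝ E] [CompleteSpace E]

lemma exp_dissipative_bound (γ₁ : ℝ) (A : E →L[ℝ] E)
    (hA : ∀ x : E, ⟪A x, x⟫ ≤ -γ₁ * ‖x‖ ^ 2) :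
    ∀ s : ℝ, 0 ≤ s → ∀ x : E, ‖NormedSpace.exp (s • A) x‖ ≤ Real.exp (-(γ₁ * s)) * ‖x‖ := by
  intro s hs x
  set g : ℝ → E := fun u => NormedSpace.exp (u • A) x with hgdef
  have hg : ∀ u : ℝ, HasDerivAt g (A (g u)) u := by
    intro u
    have h1 := hasDerivAt_exp_smul_const' (𝕂 := ℝ) A u
    have h2 := h1.clm_apply (hasDerivAt_const u x)
    simpa using h2
  set φ : ℝ → ℝ := fun u => Real.exp (2 * γ₁ * u) * ⟪g u, g u⟫ with hφdef
  have hφ : ∀ u : ℝ, HasDerivAt φ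
      ((2 * γ₁) * Real.exp (2 * γ₁ * u) * ⟪g u, g u⟫ +
        Real.exp (2 * γ₁ * u) * (⟪g u, A (g u)⟫ + ⟪A (g u), g u⟫)) u := by
    intro u
    exact (hasDerivAt_exp_mul_real (2 * γ₁) u).mul ((hg u).inner ℝ (hg u))
  have hanti : Antitone φ := by
    refine antitone_of_deriv_nonpos (fun u => (hφ u).differentiableAt) (fun u => ?_)
    rw [(hφ u).deriv]
    have h1 := hA (g u)
    have h2 : ⟪g u, A (g u)⟫ = ⟪A (g u), g u⟫ := real_inner_comm _ _
    have h3 : ⟪g u, g u⟫ = ‖g u‖ ^ 2 := real_inner_self_eq_norm_sq (g u)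
    rw [h2, h3]
    have h4 := Real.exp_pos (2 * γ₁ * u)
    nlinarith [sq_nonneg ‖g u‖]
  have hkey : φ s ≤ φ 0 := hanti hs
  have hg0 : g 0 = x := by simp [hgdef]
  have h3 : ∀ u, ⟪g u, g u⟫ = ‖g u‖ ^ 2 := fun u => real_inner_self_eq_norm_sq (g u)
  rw [hφdef] at hkey
  simp only [h3, mul_zero, Real.exp_zero, one_mul, hg0, real_inner_self_eq_norm_sq] at hkey
  have h2 : ‖g s‖ ^ 2 ≤ (Real.exp (-(γ₁ * s)) * ‖x‖) ^ 2 := by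
    have e1 : (Real.exp (-(γ₁ * s))) ^ 2 = (Real.exp (2 * γ₁ * s))⁻¹ := by
      rw [← Real.exp_neg, sq, ← Real.exp_add]
      ring_nf
    have hp := Real.exp_pos (2 * γ₁ * s)
    rw [mul_pow, e1, inv_mul_eq_div, le_div_iff₀ hp]
    nlinarith [hkey]
  have := Real.sqrt_le_sqrt h2
  rwa [Real.sqrt_sq (norm_nonneg _), Real.sqrt_sq (by positivity)] at this

lemma resolvent_bound (γ₁ : ℝ) (hγ₁ : 0 < γ₁) (A : E →L[ℝ] E)
    (hA : ∀ x : E, ⟪A x, x⟫ ≤ -γ₁ * ‖x‖ ^ 2) (t : ℝ) (Rt : E →L[ℝ] E)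
    (hRt : (1 - |t| • A) ∘L Rt = 1) (y : E) : ‖Rt y‖ ≤ ‖y‖ := by
  set x := Rt y with hxdef
  have hx : (1 - |t| • A) x = y := by
    rw [hxdef, ← ContinuousLinearMap.comp_apply, hRt, ContinuousLinearMap.one_apply]
  have h1 : ‖x‖ ^ 2 ≤ ⟪(1 - |t| • A) x, x⟫ := by
    have e : ⟪(1 - |t| • A) x, x⟫ = ⟪x, x⟫ - |t| * ⟪A x, x⟫ := by
      simp [ContinuousLinearMap.sub_apply, ContinuousLinearMap.smul_apply,
        inner_sub_left, real_inner_smul_left]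
    rw [e, real_inner_self_eq_norm_sq]
    nlinarith [mul_le_mul_of_nonneg_left (hA x) (abs_nonneg t),
      mul_nonneg (mul_nonneg (abs_nonneg t) hγ₁.le) (sq_nonneg ‖x‖)]
  have h2 : ⟪(1 - |t| • A) x, x⟫ ≤ ‖y‖ * ‖x‖ := by
    rw [hx]; exact real_inner_le_norm y x
  rcases eq_or_lt_of_le (norm_nonneg x) with h0 | h0
  · rw [← h0]; exact norm_nonneg y
  · have := h1.trans h2
    rw [sq] at this
    exact le_of_mul_le_mul_right this h0

end Aux

set_option maxHeartbeats 2000000 in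
/-- estimate (3.9). Under (H1), (H2), (H5) and `ε γ₂ < μ < γ₁`, for any
continuous `(ū, v̄)` on `[0, ∞)`, the function `Z̄₀` built from the backward extension
`z̄_t = ((I - |t|A)⁻¹ ū₀, v̄₀)` (`t ≤ 0`), `z̄_t = (ū_t, v̄_t)` (`t > 0`) via the operator
`I = (I₁, I₂)` of (★) satisfies
`sup_{t∈ℝ} e^{(μ/ε)t} |Z̄₀(t)| ≤ 2(‖ū₀‖ + ‖v̄₀‖) + 2 M_U/γ₁ + M_V/γ₂`. -/
theorem Z0_weighted_bound (n m : ℕ)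
    (γ₁ γ₂ γ₃ MU MV μ ε : ℝ)
    (A : EuclideanSpace ℝ (Fin n) →L[ℝ] EuclideanSpace ℝ (Fin n))
    (B : EuclideanSpace ℝ (Fin m) →L[ℝ] EuclideanSpace ℝ (Fin m))
    (U : EuclideanSpace ℝ (Fin n) × EuclideanSpace ℝ (Fin m) → EuclideanSpace ℝ (Fin n))
    (V : EuclideanSpace ℝ (Fin n) × EuclideanSpace ℝ (Fin m) → EuclideanSpace ℝ (Fin m))
    -- (H1)
    (hγ₁ : 0 < γ₁)
    (hA : ∀ x : EuclideanSpace ℝ (Fin n), ⟪A x, x⟫ ≤ -γ₁ * ‖x‖ ^ 2)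
    -- (H2)
    (hγ₂ : 0 < γ₂) (hγ₃ : 0 < γ₃)
    (hB₁ : ∀ t : ℝ, t ≤ 0 → ‖NormedSpace.exp (t • B)‖ ≤ Real.exp (-γ₂ * t))
    (hB₂ : ∀ t : ℝ, 0 < t → ‖NormedSpace.exp (t • B)‖ ≤ Real.exp (-γ₃ * t))
    -- (H5)
    (hU : Measurable U) (hV : Measurable V)
    (hMU : ∀ z, ‖U z‖ ≤ MU) (hMV : ∀ z, ‖V z‖ ≤ MV)
    -- scales
    (hμ : 0 < μ) (hε : 0 < ε) (hεμ : ε * γ₂ < μ) (hμγ₁ : μ < γ₁)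
    -- input paths
    (a : ℝ → EuclideanSpace ℝ (Fin n)) (b : ℝ → EuclideanSpace ℝ (Fin m))
    (ha : Measurable a) (hb : Measurable b)
    -- an arbitrary continuous path (ū, v̄) on [0, ∞)
    (ub : ℝ → EuclideanSpace ℝ (Fin n)) (vb : ℝ → EuclideanSpace ℝ (Fin m))
    (hub : ContinuousOn ub (Set.Ici 0)) (hvb : ContinuousOn vb (Set.Ici 0))
    -- the resolvents (I - |t| A)⁻¹ for t ≤ 0
    (R : ℝ → (EuclideanSpace ℝ (Fin n) →L[ℝ] EuclideanSpace ℝ (Fin n)))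
    (hR : ∀ t : ℝ, t ≤ 0 → (1 - |t| • A) ∘L R t = 1 ∧ R t ∘L (1 - |t| • A) = 1)
    -- the backward extension z̄ = (z₁, z₂)
    (z₁ : ℝ → EuclideanSpace ℝ (Fin n)) (z₂ : ℝ → EuclideanSpace ℝ (Fin m))
    (hz₁neg : ∀ t : ℝ, t ≤ 0 → z₁ t = R t (ub 0)) (hz₁pos : ∀ t : ℝ, 0 < t → z₁ t = ub t)
    (hz₂neg : ∀ t : ℝ, t ≤ 0 → z₂ t = vb 0) (hz₂pos : ∀ t : ℝ, 0 < t → z₂ t = vb t)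
    -- the function Z̄₀ = (Z₁, Z₂)
    (Z₁ : ℝ → EuclideanSpace ℝ (Fin n)) (Z₂ : ℝ → EuclideanSpace ℝ (Fin m))
    (hZ₁neg : ∀ t : ℝ, t ≤ 0 → Z₁ t = -(z₁ t) +
      ∫ r in Set.Iic t, NormedSpace.exp (((t - r) / ε) • A) (ε⁻¹ • U (z₁ r + a r, z₂ r + b r)))
    (hZ₁pos : ∀ t : ℝ, 0 < t → Z₁ t = NormedSpace.exp ((t / ε) • A)
      ((∫ r in Set.Iic (0:ℝ),
          NormedSpace.exp (((0 - r) / ε) • A) (ε⁻¹ • U (z₁ r + a r, z₂ r + b r))) - ub 0))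
    (hZ₂neg : ∀ t : ℝ, t ≤ 0 → Z₂ t = -(z₂ t) +
      (NormedSpace.exp (t • B) (vb 0) -
        ∫ r in t..0, NormedSpace.exp ((t - r) • B) (V (z₁ r + a r, z₂ r + b r))))
    (hZ₂pos : ∀ t : ℝ, 0 < t → Z₂ t = 0) :
    ∀ t : ℝ, Real.exp (μ / ε * t) * (‖Z₁ t‖ + ‖Z₂ t‖) ≤
      2 * (‖ub 0‖ + ‖vb 0‖) + 2 * MU / γ₁ + MV / γ₂ := by
  intro t
  have hMU0 : 0 ≤ MU := le_trans (norm_nonneg _) (hMU (0, 0))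
  have hMV0 : 0 ≤ MV := le_trans (norm_nonneg _) (hMV (0, 0))
  have hE0 : (0:ℝ) ≤ Real.exp (μ / ε * t) := (Real.exp_pos _).le
  have hexpA := exp_dissipative_bound γ₁ A hA
  have hMUγ : 0 ≤ MU / γ₁ := div_nonneg hMU0 hγ₁.le
  have hMVγ : 0 ≤ MV / γ₂ := div_nonneg hMV0 hγ₂.le
  -- bound on the I₁ integral
  have hIbound : ∀ s : ℝ,
      ‖∫ r in Set.Iic s, NormedSpace.exp (((s - r) / ε) • A)
        (ε⁻¹ • U (z₁ r + a r, z₂ r + b r))‖ ≤ MU / γ₁ := by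
    intro s
    set c := γ₁ / ε with hc
    have hcpos : 0 < c := div_pos hγ₁ hε
    have heq : (fun r : ℝ => (ε⁻¹ * MU) * Real.exp (c * (r - s)))
        = fun r : ℝ => ((ε⁻¹ * MU) * Real.exp (-(c * s))) * Real.exp (c * r) := by
      funext r
      rw [show c * (r - s) = -(c * s) + c * r by ring, Real.exp_add]
      ring
    have hgint : Integrable (fun r : ℝ => (ε⁻¹ * MU) * Real.exp (c * (r - s)))
        (volume.restrict (Set.Iic s)) := by
      rw [heq]
      exact (integrableOn_exp_mul_Iic' c s hcpos).const_mul _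
    refine le_trans (norm_integral_le_of_norm_le hgint ?_) ?_
    · filter_upwards [ae_restrict_mem measurableSet_Iic] with r hr
      have hrs : r ≤ s := hr
      have hnn : 0 ≤ (s - r) / ε := div_nonneg (by linarith) hε.le
      calc ‖NormedSpace.exp (((s - r) / ε) • A) (ε⁻¹ • U (z₁ r + a r, z₂ r + b r))‖
          ≤ Real.exp (-(γ₁ * ((s - r) / ε))) * ‖ε⁻¹ • U (z₁ r + a r, z₂ r + b r)‖ :=
            hexpA _ hnn _
        _ ≤ Real.exp (-(γ₁ * ((s - r) / ε))) * (ε⁻¹ * MU) := by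
            refine mul_le_mul_of_nonneg_left ?_ (Real.exp_pos _).le
            rw [norm_smul, Real.norm_eq_abs, abs_of_pos (inv_pos.mpr hε)]
            exact mul_le_mul_of_nonneg_left (hMU _) (inv_pos.mpr hε).le
        _ = (ε⁻¹ * MU) * Real.exp (c * (r - s)) := by
            rw [mul_comm]
            congr 1
            rw [hc]
            field_simp
            ring
    · have hval : ∫ r in Set.Iic s, (ε⁻¹ * MU) * Real.exp (c * (r - s))
          = ((ε⁻¹ * MU) * Real.exp (-(c * s))) * (Real.exp (c * s) / c) := by
        rw [heq, integral_const_mul _ _, integral_exp_mul_Iic' c s hcpos]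
      rw [hval, hc]
      rw [Real.exp_neg]
      have hecs := Real.exp_pos (γ₁ / ε * s)
      field_simp
      exact le_rfl
  rcases le_or_gt t 0 with ht | ht
  · -- t ≤ 0
    have hE1 : Real.exp (μ / ε * t) ≤ 1 := by
      rw [← Real.exp_zero]
      apply Real.exp_le_exp.mpr
      have : 0 < μ / ε := div_pos hμ hε
      nlinarith
    have hEF : Real.exp (μ / ε * t) * Real.exp (-γ₂ * t) ≤ 1 := by
      rw [← Real.exp_add, ← Real.exp_zero]
      apply Real.exp_le_exp.mpr
      have h1 : γ₂ < μ / ε := (lt_div_iff₀ hε).mpr (by linarith [hεμ])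
      nlinarith
    have e1 : ‖Z₁ t‖ ≤ ‖ub 0‖ + MU / γ₁ := by
      rw [hZ₁neg t ht, hz₁neg t ht]
      refine le_trans (norm_add_le _ _) ?_
      rw [norm_neg]
      exact add_le_add (resolvent_bound γ₁ hγ₁ A hA t (R t) (hR t ht).1 (ub 0)) (hIbound t)
    have e2 : ‖Z₂ t‖ ≤ ‖vb 0‖ + Real.exp (-γ₂ * t) * (‖vb 0‖ + MV / γ₂) := by
      rw [hZ₂neg t ht, hz₂neg t ht]
      have hexpB : ‖NormedSpace.exp (t • B) (vb 0)‖ ≤ Real.exp (-γ₂ * t) * ‖vb 0‖ :=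
        le_trans (ContinuousLinearMap.le_opNorm _ _)
          (mul_le_mul_of_nonneg_right (hB₁ t ht) (norm_nonneg _))
      have hJ : ‖∫ r in t..0, NormedSpace.exp ((t - r) • B) (V (z₁ r + a r, z₂ r + b r))‖
          ≤ Real.exp (-γ₂ * t) * (MV / γ₂) := by
        rw [intervalIntegral.integral_of_le ht]
        have heqB : (fun r : ℝ => (MV * Real.exp (-γ₂ * t)) * Real.exp (γ₂ * r)) =
            fun r : ℝ => (MV * Real.exp (-γ₂ * t)) * Real.exp (γ₂ * r) := rfl
        have hgint : Integrable (fun r : ℝ => (MV * Real.exp (-γ₂ * t)) * Real.exp (γ₂ * r))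
            (volume.restrict (Set.Ioc t 0)) :=
          (continuous_const.mul
            (Real.continuous_exp.comp (continuous_const.mul continuous_id))).integrableOn_Ioc
        refine le_trans (norm_integral_le_of_norm_le hgint ?_) ?_
        · filter_upwards [ae_restrict_mem measurableSet_Ioc] with r hr
          have hr1 : t < r := hr.1
          have hr2 : r ≤ 0 := hr.2
          have htr : t - r ≤ 0 := by linarith
          calc ‖NormedSpace.exp ((t - r) • B) (V (z₁ r + a r, z₂ r + b r))‖
              ≤ Real.exp (-γ₂ * (t - r)) * MV :=
                le_trans (ContinuousLinearMap.le_opNorm _ _)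
                  (mul_le_mul (hB₁ _ htr) (hMV _) (norm_nonneg _) (Real.exp_pos _).le)
            _ = (MV * Real.exp (-γ₂ * t)) * Real.exp (γ₂ * r) := by
                rw [show -γ₂ * (t - r) = -γ₂ * t + γ₂ * r by ring, Real.exp_add]
                ring
        · rw [integral_const_mul _ _, ← intervalIntegral.integral_of_le ht,
            intervalIntegral_exp_mul γ₂ t 0 hγ₂.ne']
          have h0 : Real.exp (γ₂ * 0) / γ₂ - Real.exp (γ₂ * t) / γ₂ ≤ 1 / γ₂ := by
            rw [mul_zero, Real.exp_zero]
            have := (Real.exp_pos (γ₂ * t)).le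
            have := div_nonneg (Real.exp_pos (γ₂ * t)).le hγ₂.le
            linarith
          calc MV * Real.exp (-γ₂ * t) * (Real.exp (γ₂ * 0) / γ₂ - Real.exp (γ₂ * t) / γ₂)
              ≤ MV * Real.exp (-γ₂ * t) * (1 / γ₂) :=
                mul_le_mul_of_nonneg_left h0 (by positivity)
            _ = Real.exp (-γ₂ * t) * (MV / γ₂) := by ring
      calc ‖-(vb 0) + (NormedSpace.exp (t • B) (vb 0) -
              ∫ r in t..0, NormedSpace.exp ((t - r) • B) (V (z₁ r + a r, z₂ r + b r)))‖
          ≤ ‖vb 0‖ + (‖NormedSpace.exp (t • B) (vb 0)‖ +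
              ‖∫ r in t..0, NormedSpace.exp ((t - r) • B) (V (z₁ r + a r, z₂ r + b r))‖) := by
            refine le_trans (norm_add_le _ _) ?_
            rw [norm_neg]
            exact add_le_add_right (norm_sub_le _ _) _
        _ ≤ ‖vb 0‖ + (Real.exp (-γ₂ * t) * ‖vb 0‖ + Real.exp (-γ₂ * t) * (MV / γ₂)) := by
            exact add_le_add_right (add_le_add hexpB hJ) _
        _ = ‖vb 0‖ + Real.exp (-γ₂ * t) * (‖vb 0‖ + MV / γ₂) := by ring
    have e1' : Real.exp (μ / ε * t) * ‖Z₁ t‖ ≤ ‖ub 0‖ + MU / γ₁ := by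
      calc Real.exp (μ / ε * t) * ‖Z₁ t‖
          ≤ Real.exp (μ / ε * t) * (‖ub 0‖ + MU / γ₁) := mul_le_mul_of_nonneg_left e1 hE0
        _ ≤ 1 * (‖ub 0‖ + MU / γ₁) := by
            refine mul_le_mul_of_nonneg_right hE1 ?_
            positivity
        _ = ‖ub 0‖ + MU / γ₁ := one_mul _
    have e2' : Real.exp (μ / ε * t) * ‖Z₂ t‖ ≤ ‖vb 0‖ + (‖vb 0‖ + MV / γ₂) := by
      calc Real.exp (μ / ε * t) * ‖Z₂ t‖
          ≤ Real.exp (μ / ε * t) * (‖vb 0‖ + Real.exp (-γ₂ * t) * (‖vb 0‖ + MV / γ₂)) :=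
            mul_le_mul_of_nonneg_left e2 hE0
        _ = Real.exp (μ / ε * t) * ‖vb 0‖ +
            (Real.exp (μ / ε * t) * Real.exp (-γ₂ * t)) * (‖vb 0‖ + MV / γ₂) := by ring
        _ ≤ 1 * ‖vb 0‖ + 1 * (‖vb 0‖ + MV / γ₂) := by
            refine add_le_add (mul_le_mul_of_nonneg_right hE1 (norm_nonneg _))
              (mul_le_mul_of_nonneg_right hEF ?_)
            positivity
        _ = ‖vb 0‖ + (‖vb 0‖ + MV / γ₂) := by ring
    rw [mul_add]
    have hh : 2 * MU / γ₁ = 2 * (MU / γ₁) := by ring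
    rw [hh]
    linarith [norm_nonneg (ub 0)]
  · -- 0 < t
    rw [hZ₁pos t ht, hZ₂pos t ht]
    set J := ∫ r in Set.Iic (0:ℝ), NormedSpace.exp (((0 - r) / ε) • A)
      (ε⁻¹ • U (z₁ r + a r, z₂ r + b r)) with hJdef
    rw [norm_zero, add_zero]
    have hnn : 0 ≤ t / ε := div_nonneg ht.le hε.le
    have h1 := hexpA (t / ε) hnn (J - ub 0)
    have h2 : ‖J - ub 0‖ ≤ MU / γ₁ + ‖ub 0‖ :=
      le_trans (norm_sub_le _ _) (add_le_add_left (hIbound 0) _)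
    have hEF2 : Real.exp (μ / ε * t) * Real.exp (-(γ₁ * (t / ε))) ≤ 1 := by
      rw [← Real.exp_add, ← Real.exp_zero]
      apply Real.exp_le_exp.mpr
      have heq : μ / ε * t + -(γ₁ * (t / ε)) = (μ - γ₁) * t / ε := by ring
      rw [heq]
      apply div_nonpos_of_nonpos_of_nonneg _ hε.le
      exact mul_nonpos_of_nonpos_of_nonneg (by linarith) ht.le
    calc Real.exp (μ / ε * t) * ‖NormedSpace.exp ((t / ε) • A) (J - ub 0)‖
        ≤ Real.exp (μ / ε * t) * (Real.exp (-(γ₁ * (t / ε))) * (MU / γ₁ + ‖ub 0‖)) := by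
          refine mul_le_mul_of_nonneg_left (le_trans h1 ?_) hE0
          exact mul_le_mul_of_nonneg_left h2 (Real.exp_pos _).le
      _ = (Real.exp (μ / ε * t) * Real.exp (-(γ₁ * (t / ε)))) * (MU / γ₁ + ‖ub 0‖) := by ring
      _ ≤ 1 * (MU / γ₁ + ‖ub 0‖) := by
          refine mul_le_mul_of_nonneg_right hEF2 ?_
          positivity
      _ ≤ 2 * (‖ub 0‖ + ‖vb 0‖) + 2 * MU / γ₁ + MV / γ₂ := by
          rw [one_mul]
          have h3 : 2 * MU / γ₁ = 2 * (MU / γ₁) := by ring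
          rw [h3]
          linarith [norm_nonneg (vb 0), norm_nonneg (ub 0)]
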